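/- Let P be a compact convex body in ℝⁿ with nonempty interior and let G : P → ℝ ∪ {+∞} be a lower semicontinuous convex function which is finite at some point of P and such that |G| is Lebesgue integrable on P. Then |inf_P G| ≤ (1 / ((2^{1/(n+1)} − 1) · vol(P))) · ∫_P |G(s)| ds, where vol(P) is the Lebesgue measure of P. -/

import Mathlib

open MeasureTheory Filter Topology RealInnerProductSpace Set

private lemma ereal_measurable_abs : Measurable EReal.abs := by
  apply EReal.measurable_of_measurable_real
  simpa [EReal.abs_def, Function.comp_def] using (ENNReal.measurable_ofReal.comp (_root_.measurable_abs))

private lemma ereal_abs_le_abs {a b : EReal} (ha : 0 ≤ a) (hab : a ≤ b) : a.abs ≤ b.abs := by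
  rcases eq_or_ne b ⊤ with rfl | hb
  · simp
  have hat : a ≠ ⊤ := fun h => hb (top_le_iff.mp (h ▸ hab))
  have hab' : a ≠ ⊥ := fun h => by simp [h] at ha
  have hbb : b ≠ ⊥ := fun h => hab' (le_bot_iff.mp (h ▸ hab))
  have h0a : 0 ≤ a.toReal := by
    have := EReal.toReal_le_toReal ha (by simp) hat
    simpa using this
  have hle : a.toReal ≤ b.toReal := EReal.toReal_le_toReal hab hab' hb
  rw [← EReal.coe_toReal hat hab', ← EReal.coe_toReal hb hbb, EReal.abs_def, EReal.abs_def]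
  apply ENNReal.ofReal_le_ofReal
  rw [abs_of_nonneg h0a, abs_of_nonneg (h0a.trans hle)]
  exact hle

private lemma sublevel_closed {α : Type*} [TopologicalSpace α] {P : Set α} (hP : IsClosed P)
    {G : α → EReal} (hlsc : LowerSemicontinuousOn G P) (b : EReal) :
    IsClosed {x | x ∈ P ∧ G x ≤ b} := by
  refine isClosed_of_closure_subset ?_
  intro x hx
  have hxP : x ∈ P := hP.closure_subset ((closure_mono (fun y hy => hy.1)) hx)
  refine ⟨hxP, ?_⟩
  by_contra hbx
  push_neg at hbx
  have hev := hlsc x hxP b hbx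
  have hne : (𝓝[{x | x ∈ P ∧ G x ≤ b}] x).NeBot := mem_closure_iff_nhdsWithin_neBot.1 hx
  have hev' : ∀ᶠ x' in 𝓝[{x | x ∈ P ∧ G x ≤ b}] x, b < G x' :=
    hev.filter_mono (nhdsWithin_mono x (fun y hy => hy.1))
  have hev'' : ∀ᶠ x' in 𝓝[{x | x ∈ P ∧ G x ≤ b}] x, G x' ≤ b :=
    eventually_nhdsWithin_of_forall (fun y hy => hy.2)
  rcases (hev'.and hev'').exists with ⟨y, h1, h2⟩
  exact absurd h2 (not_le.2 h1)

private lemma exists_min {n : ℕ} {P : Set (EuclideanSpace ℝ (Fin n))} (hPc : IsCompact P)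
    (hne : P.Nonempty) {G : EuclideanSpace ℝ (Fin n) → EReal}
    (hlsc : LowerSemicontinuousOn G P) : ∃ x₀ ∈ P, ∀ s ∈ P, G x₀ ≤ G s := by
  haveI : Nonempty P := hne.to_subtype
  set F : P → Set (EuclideanSpace ℝ (Fin n)) := fun s => {x | x ∈ P ∧ G x ≤ G s} with hF
  have hdir : Directed (· ⊇ ·) F := by
    intro s t
    rcases le_total (G s) (G t) with h | h
    · exact ⟨s, subset_rfl, fun x hx => ⟨hx.1, hx.2.trans h⟩⟩
    · exact ⟨t, fun x hx => ⟨hx.1, hx.2.trans h⟩, subset_rfl⟩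
  have hclosed : ∀ s : P, IsClosed (F s) := fun s => sublevel_closed hPc.isClosed hlsc _
  have hcomp : ∀ s : P, IsCompact (F s) :=
    fun s => hPc.of_isClosed_subset (hclosed s) (fun x hx => hx.1)
  have hnon : ∀ s : P, (F s).Nonempty := fun s => ⟨s, s.2, le_rfl⟩
  obtain ⟨x₀, hx₀⟩ :=
    IsCompact.nonempty_iInter_of_directed_nonempty_isCompact_isClosed F hdir hnon hcomp hclosed
  rw [mem_iInter] at hx₀
  exact ⟨x₀, (hx₀ ⟨hne.some, hne.some_mem⟩).1, fun s hs => (hx₀ ⟨s, hs⟩).2⟩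

private lemma amgm_pow (n : ℕ) {R : ℝ} (hR : 0 < R) :
    (2:ℝ) ^ (((n:ℝ) + 1))⁻¹ * (((n:ℝ) + 1) * R ^ n) ≤ 2 + (n:ℝ) * R ^ (n + 1) := by
  have hRn : (0:ℝ) < R ^ n := pow_pos hR n
  have hn1 : (0:ℝ) < (n:ℝ) + 1 := by positivity
  have hw : ((n:ℝ)+1)⁻¹ + (n:ℝ)/((n:ℝ)+1) = 1 := by field_simp; all_goals ring
  have key := Real.geom_mean_le_arith_mean2_weighted
      (by positivity : (0:ℝ) ≤ ((n:ℝ)+1)⁻¹) (by positivity : (0:ℝ) ≤ (n:ℝ)/((n:ℝ)+1))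
      (by positivity : (0:ℝ) ≤ 2 / R ^ n) hR.le hw
  have h1 : (2 / R^n : ℝ) ^ (((n:ℝ)+1))⁻¹ = (2:ℝ) ^ (((n:ℝ)+1))⁻¹ / R ^ ((n:ℝ)/((n:ℝ)+1)) := by
    rw [Real.div_rpow (by norm_num) hRn.le]
    congr 1
    rw [← Real.rpow_natCast R n, ← Real.rpow_mul hR.le]
    congr 1
    all_goals field_simp
  rw [h1, div_mul_cancel₀] at key
  · refine le_trans (mul_le_mul_of_nonneg_right key (by positivity)) (le_of_eq ?_)
    field_simp
    all_goals ring
  · exact ne_of_gt (Real.rpow_pos_of_pos hR _)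

private lemma real_key (n : ℕ) {mu V W R : ℝ} (hmu : 0 < mu) (hW : 0 < W) (hR : 1 ≤ R)
    (hWR : W * R ^ n = V) :
    ((2:ℝ) ^ (((n:ℝ) + 1))⁻¹ - 1) * mu * V ≤
      W * (mu / ((n:ℝ) + 1)) +
        (V * (mu * (R - 1)) - W * (mu * ((R ^ (n+1) - 1) / ((n:ℝ) + 1)))) := by
  have hR0 : 0 < R := lt_of_lt_of_le one_pos hR
  have key := amgm_pow n hR0
  have hn1 : (0:ℝ) < (n:ℝ) + 1 := by positivity
  have h2 := mul_le_mul_of_nonneg_left key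
    (by positivity : (0:ℝ) ≤ W * mu / ((n:ℝ) + 1))
  rw [← hWR]
  have hexp : W * (mu / ((n:ℝ)+1)) +
      ((W * R ^ n) * (mu * (R - 1)) - W * (mu * ((R ^ (n+1) - 1) / ((n:ℝ) + 1)))) -
      ((2:ℝ) ^ (((n:ℝ) + 1))⁻¹ - 1) * mu * (W * R ^ n) =
      W * mu / ((n:ℝ)+1) * ((2 + (n:ℝ) * R ^ (n + 1)) -
        (2:ℝ) ^ (((n:ℝ) + 1))⁻¹ * (((n:ℝ) + 1) * R ^ n)) := by
    field_simp
    ring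
  nlinarith [h2, hexp]

private lemma integral_piece1 (n : ℕ) {m : ℝ} (hm : 0 < m) :
    ∫ t in Ioo (0:ℝ) m, (1 - t/m)^n = m / ((n:ℝ)+1) := by
  rw [← integral_Ioc_eq_integral_Ioo, ← intervalIntegral.integral_of_le hm.le]
  have h1 : (∫ t in (0:ℝ)..m, (1 - t/m)^n) = m • ∫ y in (0:ℝ)..(1:ℝ), (1-y)^n := by
    have := intervalIntegral.integral_comp_div (a := 0) (b := m) (c := m)
      (f := fun y => (1 - y)^n) hm.ne'
    simpa [div_self hm.ne'] using this
  rw [h1]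
  have h2 : (∫ y in (0:ℝ)..(1:ℝ), (1-y)^n) = ∫ y in (0:ℝ)..(1:ℝ), y^n := by
    have := intervalIntegral.integral_comp_sub_left (a := (0:ℝ)) (b := (1:ℝ))
      (fun y => y^n) 1
    simpa using this
  rw [h2, integral_pow]
  push_cast
  simp [smul_eq_mul]
  ring

private lemma integral_piece2 (n : ℕ) {m T Vr Wr R : ℝ} (hm : 0 < m) (hT : 0 ≤ T)
    (hR : 1 + T/m = R) :
    ∫ t in Ioo (0:ℝ) T, (Vr - (1+t/m)^n * Wr) =
      Vr * T - Wr * (m * ((R^(n+1) - 1)/((n:ℝ)+1))) := by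
  have hc : Continuous fun t:ℝ => (1+t/m)^n := by fun_prop
  rw [← integral_Ioc_eq_integral_Ioo, ← intervalIntegral.integral_of_le hT]
  rw [intervalIntegral.integral_sub intervalIntegrable_const
    ((by fun_prop : Continuous fun t:ℝ => (1+t/m)^n * Wr).intervalIntegrable _ _)]
  rw [intervalIntegral.integral_const, intervalIntegral.integral_mul_const]
  have h2 : (∫ t in (0:ℝ)..T, (1+t/m)^n) = m • ∫ y in (0:ℝ)..(T/m), (1+y)^n := by
    have := intervalIntegral.integral_comp_div (a := 0) (b := T) (c := m)
      (f := fun y => (1 + y)^n) hm.ne'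
    simpa using this
  have h3 : (∫ y in (0:ℝ)..(T/m), (1+y)^n) = ∫ y in (1:ℝ)..(1+T/m), y^n := by
    have := intervalIntegral.integral_comp_add_left (a := (0:ℝ)) (b := T/m)
      (fun y => y^n) 1
    simpa using this
  rw [h2, h3, integral_pow, hR]
  push_cast
  simp [smul_eq_mul]
  ring

set_option maxHeartbeats 2000000 in
theorem inf_bound_by_L1_norm
    (n : ℕ) (P : Set (EuclideanSpace ℝ (Fin n)))
    (hPc : IsCompact P) (hPconv : Convex ℝ P) (hPint : (interior P).Nonempty)
    (G : EuclideanSpace ℝ (Fin n) → EReal)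
    (hGbot : ∀ s, G s ≠ ⊥)
    (hlsc : LowerSemicontinuousOn G P)
    (hconv : ∀ s ∈ P, ∀ t ∈ P, ∀ a b : ℝ, 0 ≤ a → 0 ≤ b → a + b = 1 →
      G (a • s + b • t) ≤ (a : EReal) * G s + (b : EReal) * G t)
    (hfin : ∃ s ∈ P, G s ≠ ⊤)
    (hint : ∫⁻ s in P, (G s).abs ∂volume ≠ ⊤) :
    (sInf (G '' P)).abs ≤
      (ENNReal.ofReal ((2:ℝ) ^ (((n:ℝ) + 1))⁻¹ - 1) * volume P)⁻¹ *
        ∫⁻ s in P, (G s).abs ∂volume := by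
  classical
  have hPne : P.Nonempty := hPint.mono interior_subset
  have hPmeas : MeasurableSet P := hPc.isClosed.measurableSet
  obtain ⟨x₀, hx₀P, hmin⟩ := exists_min hPc hPne hlsc
  have hsInf : sInf (G '' P) = G x₀ :=
    le_antisymm (sInf_le ⟨x₀, hx₀P, rfl⟩)
      (le_sInf (by rintro b ⟨s, hs, rfl⟩; exact hmin s hs))
  rw [hsInf]
  have hc0 : (0:ℝ) < (2:ℝ) ^ (((n:ℝ)+1))⁻¹ - 1 := by
    have h1 : (1:ℝ) < (2:ℝ) ^ (((n:ℝ)+1))⁻¹ :=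
      (Real.one_lt_rpow_iff_of_pos (by norm_num)).mpr (Or.inl ⟨one_lt_two, by positivity⟩)
    linarith
  have hV0 : volume P ≠ 0 := (Measure.measure_pos_of_nonempty_interior _ hPint).ne'
  have hVtop : volume P ≠ ⊤ := hPc.measure_lt_top.ne
  set G' : EuclideanSpace ℝ (Fin n) → EReal := fun x => if x ∈ P then G x else ⊤ with hG'def
  have hG'lsc : LowerSemicontinuous G' := by
    rw [lowerSemicontinuous_iff_isClosed_preimage]
    intro y
    by_cases hy : y = ⊤
    · have : G' ⁻¹' Iic y = univ := by
        ext x; simp [hy]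
      rw [this]; exact isClosed_univ
    · have : G' ⁻¹' Iic y = {x | x ∈ P ∧ G x ≤ y} := by
        ext x
        by_cases hx : x ∈ P <;> simp [hG'def, hx, top_le_iff, hy]
      rw [this]; exact sublevel_closed hPc.isClosed hlsc y
  have hG'mble : Measurable G' := hG'lsc.measurable
  have habs_mble : Measurable fun x => (G' x).abs := ereal_measurable_abs.comp hG'mble
  have hIcong : ∫⁻ s in P, (G s).abs ∂volume = ∫⁻ s in P, (G' s).abs ∂volume :=
    setLIntegral_congr_fun hPmeas (fun x hx => by simp [hG'def, hx])
  rcases le_or_gt 0 (G x₀) with hpos | hneg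
  · -- easy case: inf is nonnegative
    have h2 : (G x₀).abs * volume P ≤ ∫⁻ s in P, (G s).abs ∂volume := by
      rw [hIcong, ← setLIntegral_const]
      refine setLIntegral_mono habs_mble (fun s hs => ?_)
      have : G' s = G s := if_pos hs
      rw [this]
      exact ereal_abs_le_abs hpos (hmin s hs)
    have hcle : ENNReal.ofReal ((2:ℝ) ^ (((n:ℝ)+1))⁻¹ - 1) ≤ 1 := by
      rw [← ENNReal.ofReal_one]
      apply ENNReal.ofReal_le_ofReal
      have h2' : (2:ℝ) ^ (((n:ℝ)+1))⁻¹ ≤ (2:ℝ) ^ (1:ℝ) := by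
        apply Real.rpow_le_rpow_of_exponent_le one_le_two
        rw [inv_le_one_iff₀]
        right
        linarith [Nat.cast_nonneg (α := ℝ) n]
      rw [Real.rpow_one] at h2'
      linarith
    have hmono : (volume P)⁻¹ ≤ (ENNReal.ofReal ((2:ℝ) ^ (((n:ℝ)+1))⁻¹ - 1) * volume P)⁻¹ := by
      apply ENNReal.inv_le_inv'
      calc ENNReal.ofReal ((2:ℝ) ^ (((n:ℝ)+1))⁻¹ - 1) * volume P
          ≤ 1 * volume P := mul_le_mul_left hcle _
        _ = volume P := one_mul _
    calc (G x₀).abs = (volume P)⁻¹ * ((G x₀).abs * volume P) := by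
          rw [mul_comm (G x₀).abs, ← mul_assoc, ENNReal.inv_mul_cancel hV0 hVtop, one_mul]
      _ ≤ (volume P)⁻¹ * ∫⁻ s in P, (G s).abs ∂volume := mul_le_mul_right h2 _
      _ ≤ (ENNReal.ofReal ((2:ℝ) ^ (((n:ℝ)+1))⁻¹ - 1) * volume P)⁻¹ *
            ∫⁻ s in P, (G s).abs ∂volume := mul_le_mul_left hmono _
  · -- hard case: the minimum is negative
    have hx₀bot : G x₀ ≠ ⊥ := hGbot x₀
    have hx₀top : G x₀ ≠ ⊤ := hneg.ne_top
    set μ' : ℝ := -(G x₀).toReal with hμ'def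
    have hcoe : ((-μ' : ℝ) : EReal) = G x₀ := by
      rw [hμ'def, neg_neg, EReal.coe_toReal hx₀top hx₀bot]
    have hμ'pos : 0 < μ' := by
      rw [← hcoe, show (0:EReal) = ((0:ℝ):EReal) from rfl, EReal.coe_lt_coe_iff] at hneg
      linarith
    set N : Set (EuclideanSpace ℝ (Fin n)) := {x | x ∈ P ∧ G x ≤ 0} with hNdef
    have hx₀N : x₀ ∈ N := ⟨hx₀P, hneg.le⟩
    have hNP : N ⊆ P := fun x hx => hx.1
    set W := volume N with hWdef
    have hWV : W ≤ volume P := measure_mono hNP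
    have hWtop : W ≠ ⊤ := (lt_of_le_of_lt hWV hPc.measure_lt_top).ne
    -- scaled copies of N
    have hDvol : ∀ r : ℝ, 0 ≤ r →
        volume (AffineMap.homothety x₀ r '' N) = ENNReal.ofReal (r^n) * W := by
      intro r hr
      rw [Measure.addHaar_image_homothety, finrank_euclideanSpace_fin,
        abs_of_nonneg (pow_nonneg hr n)]
    -- L1 : contraction of N lies deep in the negativity region
    have L1 : ∀ r : ℝ, 0 ≤ r → r ≤ 1 → ∀ z ∈ N,
        AffineMap.homothety x₀ r z ∈ P ∧
          G (AffineMap.homothety x₀ r z) ≤ (((-((1-r) * μ')) : ℝ) : EReal) := by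
      intro r hr0 hr1 z hz
      have hzP : z ∈ P := hNP hz
      have heq : AffineMap.homothety x₀ r z = (1-r) • x₀ + r • z := by
        simp only [AffineMap.homothety_apply, vsub_eq_sub, vadd_eq_add]
        module
      have hmem : (1-r) • x₀ + r • z ∈ P := hPconv hx₀P hzP (by linarith) hr0 (by ring)
      have hzbot : G z ≠ ⊥ := hGbot z
      have hztop : G z ≠ ⊤ := by
        intro h
        have h2 := hz.2
        rw [h] at h2
        simp at h2
      have hGzc : G z = (((G z).toReal : ℝ) : EReal) := (EReal.coe_toReal hztop hzbot).symm
      have hgz0 : (G z).toReal ≤ 0 := by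
        have := EReal.toReal_le_toReal hz.2 hzbot (by simp)
        simpa using this
      have hb := hconv x₀ hx₀P z hzP (1-r) r (by linarith) hr0 (by ring)
      rw [heq]
      refine ⟨hmem, hb.trans ?_⟩
      rw [← hcoe, hGzc]
      rw [← EReal.coe_mul, ← EReal.coe_mul, ← EReal.coe_add, EReal.coe_le_coe_iff]
      nlinarith [mul_nonneg hr0 (neg_nonneg.mpr hgz0)]
    -- L2 : sublevel sets are contained in dilations of N
    have L2 : ∀ t : ℝ, 0 ≤ t → ∀ x, x ∈ P → G x ≤ (t : EReal) →
        x ∈ AffineMap.homothety x₀ (1 + t/μ') '' N := by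
      intro t ht x hxP hGx
      set lam : ℝ := 1 + t/μ' with hlamdef
      have hlam1 : 1 ≤ lam := by
        rw [hlamdef]
        have : 0 ≤ t/μ' := div_nonneg ht hμ'pos.le
        linarith
      have hlam0 : 0 < lam := lt_of_lt_of_le one_pos hlam1
      have hinv0 : 0 ≤ lam⁻¹ := inv_nonneg.mpr hlam0.le
      have hinv1 : lam⁻¹ ≤ 1 := inv_le_one_of_one_le₀ hlam1
      have hzeq : AffineMap.homothety x₀ lam⁻¹ x = (1 - lam⁻¹) • x₀ + lam⁻¹ • x := by
        simp only [AffineMap.homothety_apply, vsub_eq_sub, vadd_eq_add]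
        module
      have hzP : (1 - lam⁻¹) • x₀ + lam⁻¹ • x ∈ P :=
        hPconv hx₀P hxP (by linarith) hinv0 (by ring)
      have hxbot : G x ≠ ⊥ := hGbot x
      have hxtop : G x ≠ ⊤ := (hGx.trans_lt (EReal.coe_lt_top t)).ne
      have hGxc : G x = (((G x).toReal : ℝ) : EReal) := (EReal.coe_toReal hxtop hxbot).symm
      have hgxt : (G x).toReal ≤ t := by
        have := EReal.toReal_le_toReal hGx hxbot (EReal.coe_ne_top t)
        simpa using this
      have hb := hconv x₀ hx₀P x hxP (1 - lam⁻¹) lam⁻¹ (by linarith) hinv0 (by ring)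
      have hGz : G ((1 - lam⁻¹) • x₀ + lam⁻¹ • x) ≤ 0 := by
        refine hb.trans ?_
        rw [← hcoe, hGxc]
        rw [← EReal.coe_mul, ← EReal.coe_mul, ← EReal.coe_add,
          show (0:EReal) = ((0:ℝ):EReal) from rfl, EReal.coe_le_coe_iff]
        have hid : (1 - lam⁻¹) * (-μ') + lam⁻¹ * t = 0 := by
          rw [hlamdef]
          field_simp
          all_goals ring
        have := mul_le_mul_of_nonneg_left hgxt hinv0
        linarith
      refine ⟨(1 - lam⁻¹) • x₀ + lam⁻¹ • x, ⟨hzP, hGz⟩, ?_⟩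
      rw [← hzeq]
      simp only [AffineMap.homothety_apply, vsub_eq_sub, vadd_eq_add]
      rw [add_sub_cancel_right, smul_smul, mul_inv_cancel₀ hlam0.ne', one_smul]
      abel
    -- the real-valued function used in the layer cake formula
    set f : EuclideanSpace ℝ (Fin n) → ℝ := fun x => ((G' x).abs).toReal with hfdef
    have hfmble : Measurable f := habs_mble.ennreal_toReal
    -- null set of infinite values
    have htopnull : volume {x | x ∈ P ∧ G x = ⊤} = 0 := by
      have h1 : ∀ᵐ x ∂(volume.restrict P), (G' x).abs < ⊤ :=
        ae_lt_top habs_mble (by rwa [← hIcong])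
      have h2 : (volume.restrict P) {x | ¬ (G' x).abs < ⊤} = 0 := ae_iff.mp h1
      rw [Measure.restrict_apply' hPmeas] at h2
      refine measure_mono_null ?_ h2
      intro x hx
      refine ⟨?_, hx.1⟩
      simp only [mem_setOf_eq, not_lt, top_le_iff]
      rw [hG'def]
      simp [hx.1, hx.2]
    -- layer cake formula
    have hlayer : ∫⁻ s in P, (G s).abs ∂volume =
        ∫⁻ t in Ioi (0:ℝ), (volume.restrict P) {a | t ≤ f a} := by
      rw [hIcong]
      have hcg : ∫⁻ s in P, (G' s).abs ∂volume = ∫⁻ s in P, ENNReal.ofReal (f s) ∂volume := by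
        apply lintegral_congr_ae
        filter_upwards [ae_lt_top habs_mble (by rwa [← hIcong])] with x hx
        rw [hfdef]
        simp [ENNReal.ofReal_toReal hx.ne]
      rw [hcg, lintegral_eq_lintegral_meas_le _
        (ae_of_all _ fun x => ENNReal.toReal_nonneg) hfmble.aemeasurable]
    -- sets where G is large
    set S₂ : ℝ → Set (EuclideanSpace ℝ (Fin n)) :=
      fun t => {x | x ∈ P ∧ (t:EReal) ≤ G x ∧ G x ≠ ⊤} with hS₂def
    have hS2meas : ∀ t : ℝ, MeasurableSet (S₂ t) := by
      intro t
      have : S₂ t = P ∩ G' ⁻¹' (Ici (t:EReal)) ∩ (G' ⁻¹' {⊤})ᶜ := by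
        ext x
        by_cases hx : x ∈ P <;> simp [hS₂def, hG'def, hx]
      rw [this]
      exact ((hPmeas.inter (hG'mble measurableSet_Ici)).inter
        (hG'mble (measurableSet_singleton _)).compl)
    have hS2sub : ∀ t : ℝ, 0 < t →
        volume P ≤ ENNReal.ofReal ((1+t/μ')^n) * W + volume (S₂ t) := by
      intro t ht
      have hcb : P ⊆ (AffineMap.homothety x₀ (1+t/μ') '' N) ∪
          (S₂ t ∪ {x | x ∈ P ∧ G x = ⊤}) := by
        intro x hxP
        by_cases htop : G x = ⊤
        · exact Or.inr (Or.inr ⟨hxP, htop⟩)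
        by_cases hle : G x ≤ (t:EReal)
        · exact Or.inl (L2 t ht.le x hxP hle)
        · exact Or.inr (Or.inl ⟨hxP, (not_le.mp hle).le, htop⟩)
      calc volume P ≤ volume ((AffineMap.homothety x₀ (1+t/μ') '' N) ∪
            (S₂ t ∪ {x | x ∈ P ∧ G x = ⊤})) := measure_mono hcb
        _ ≤ volume (AffineMap.homothety x₀ (1+t/μ') '' N) +
            volume (S₂ t ∪ {x | x ∈ P ∧ G x = ⊤}) := measure_union_le _ _
        _ ≤ volume (AffineMap.homothety x₀ (1+t/μ') '' N) +
            (volume (S₂ t) + volume {x | x ∈ P ∧ G x = ⊤}) :=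
              add_le_add le_rfl (measure_union_le _ _)
        _ = ENNReal.ofReal ((1+t/μ')^n) * W + volume (S₂ t) := by
            rw [htopnull, add_zero, hDvol _ (by positivity)]
    have hS2f : ∀ t : ℝ, 0 < t → S₂ t ⊆ {a | t ≤ f a} ∩ P := by
      intro t ht x hx
      obtain ⟨hxP, hge, htop⟩ := hx
      refine ⟨?_, hxP⟩
      have hbot : G x ≠ ⊥ := hGbot x
      show t ≤ ((G' x).abs).toReal
      rw [show G' x = G x from if_pos hxP, ← EReal.coe_toReal htop hbot, EReal.abs_def,
        ENNReal.toReal_ofReal (abs_nonneg _)]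
      have h1 : t ≤ (G x).toReal := by
        have := EReal.toReal_le_toReal hge (EReal.coe_ne_bot t) htop
        simpa using this
      exact h1.trans (le_abs_self _)
    have hS1f : ∀ t : ℝ, 0 < t → t < μ' →
        AffineMap.homothety x₀ (1 - t/μ') '' N ⊆ {a | t ≤ f a} ∩ P := by
      intro t ht htμ
      rintro y ⟨z, hz, rfl⟩
      have hdr : t/μ' ≤ 1 := by rw [div_le_one hμ'pos]; exact htμ.le
      have hr0 : (0:ℝ) ≤ 1 - t/μ' := by linarith
      have hr1 : (1:ℝ) - t/μ' ≤ 1 := by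
        have : 0 ≤ t/μ' := div_nonneg ht.le hμ'pos.le
        linarith
      obtain ⟨hmemP, hle⟩ := L1 _ hr0 hr1 z hz
      have hidt : (1 - (1 - t/μ')) * μ' = t := by field_simp; ring
      rw [hidt] at hle
      refine ⟨?_, hmemP⟩
      have hbot : G (AffineMap.homothety x₀ (1 - t/μ') z) ≠ ⊥ := hGbot _
      have htop : G (AffineMap.homothety x₀ (1 - t/μ') z) ≠ ⊤ :=
        (hle.trans_lt (EReal.coe_lt_top _)).ne
      show t ≤ ((G' _).abs).toReal
      rw [show G' (AffineMap.homothety x₀ (1 - t/μ') z) =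
        G (AffineMap.homothety x₀ (1 - t/μ') z) from if_pos hmemP,
        ← EReal.coe_toReal htop hbot, EReal.abs_def, ENNReal.toReal_ofReal (abs_nonneg _)]
      have h1 : (G (AffineMap.homothety x₀ (1 - t/μ') z)).toReal ≤ -t := by
        have := EReal.toReal_le_toReal hle hbot (EReal.coe_ne_top _)
        simpa using this
      rw [abs_of_neg (by linarith)]
      linarith
    -- the two lower bounding integrands
    set c1 : ℝ → ENNReal := fun t =>
      (Ioo (0:ℝ) μ').indicator (fun t => ENNReal.ofReal ((1 - t/μ')^n) * W) t with hc1def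
    set c2 : ℝ → ENNReal := fun t =>
      volume P - ENNReal.ofReal ((1 + t/μ')^n) * W with hc2def
    have hc1meas : Measurable c1 := by
      apply Measurable.indicator _ measurableSet_Ioo
      have hcont : Continuous fun t:ℝ => (1 - t/μ')^n := by fun_prop
      exact ((ENNReal.continuous_ofReal.comp hcont).measurable).mul (measurable_const)
    have hbound : ∀ t ∈ Ioi (0:ℝ), c1 t + c2 t ≤ (volume.restrict P) {a | t ≤ f a} := by
      intro t ht
      rw [Measure.restrict_apply' hPmeas]
      have hc2le : c2 t ≤ volume (S₂ t) := tsub_le_iff_left.mpr (hS2sub t ht)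
      by_cases htμ : t < μ'
      · have hdr : t/μ' ≤ 1 := by rw [div_le_one hμ'pos]; exact htμ.le
        have hr0 : (0:ℝ) ≤ 1 - t/μ' := by linarith
        have hdisj : Disjoint (AffineMap.homothety x₀ (1 - t/μ') '' N) (S₂ t) := by
          rw [Set.disjoint_left]
          rintro a ⟨z, hz, rfl⟩ ⟨haP, hge, -⟩
          have hr1 : (1:ℝ) - t/μ' ≤ 1 := by
            have : 0 ≤ t/μ' := div_nonneg (le_of_lt ht) hμ'pos.le
            linarith
          have hle := (L1 _ hr0 hr1 z hz).2
          have hidt : (1 - (1 - t/μ')) * μ' = t := by field_simp; ring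
          rw [hidt] at hle
          have hcon : (t:EReal) ≤ ((-t : ℝ) : EReal) := le_trans hge hle
          rw [EReal.coe_le_coe_iff] at hcon
          have ht0 : (0:ℝ) < t := ht
          linarith
        have hc1eq : c1 t = volume (AffineMap.homothety x₀ (1 - t/μ') '' N) := by
          rw [hc1def]
          simp only
          rw [Set.indicator_of_mem (Set.mem_Ioo.mpr ⟨ht, htμ⟩), hDvol _ hr0]
        rw [hc1eq]
        calc volume (AffineMap.homothety x₀ (1 - t/μ') '' N) + c2 t
            ≤ volume (AffineMap.homothety x₀ (1 - t/μ') '' N) + volume (S₂ t) :=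
              add_le_add le_rfl hc2le
          _ = volume ((AffineMap.homothety x₀ (1 - t/μ') '' N) ∪ S₂ t) :=
              (measure_union hdisj (hS2meas t)).symm
          _ ≤ volume ({a | t ≤ f a} ∩ P) :=
              measure_mono (union_subset (hS1f t ht htμ) (hS2f t ht))
      · have hc1z : c1 t = 0 := by
          rw [hc1def]
          simp only
          exact Set.indicator_of_notMem (fun h => htμ h.2) _
        rw [hc1z, zero_add]
        exact hc2le.trans (measure_mono (hS2f t ht))
    have hIbound : ∫⁻ t in Ioi (0:ℝ), (c1 t + c2 t) ≤ ∫⁻ s in P, (G s).abs ∂volume := by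
      rw [hlayer]
      exact setLIntegral_mono' measurableSet_Ioi hbound
    -- compute ∫ c1
    set Vr := (volume P).toReal with hVrdef
    set Wr := W.toReal with hWrdef
    have hVr : volume P = ENNReal.ofReal Vr := (ENNReal.ofReal_toReal hVtop).symm
    have hWr : W = ENNReal.ofReal Wr := (ENNReal.ofReal_toReal hWtop).symm
    have hI1 : ∫⁻ t in Ioi (0:ℝ), c1 t = ENNReal.ofReal (Wr * (μ' / ((n:ℝ)+1))) := by
      rw [hc1def]
      rw [lintegral_indicator measurableSet_Ioo]
      rw [Measure.restrict_restrict measurableSet_Ioo]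
      have hIooI : Ioo (0:ℝ) μ' ∩ Ioi 0 = Ioo 0 μ' :=
        inter_eq_left.mpr (fun x hx => mem_Ioi.mpr hx.1)
      rw [hIooI]
      have hcont : Continuous fun t:ℝ => (1 - t/μ')^n := by fun_prop
      have hmmeas : Measurable fun t:ℝ => ENNReal.ofReal ((1 - t/μ')^n) :=
        ENNReal.measurable_ofReal.comp hcont.measurable
      rw [lintegral_mul_const W hmmeas]
      have hInt : IntegrableOn (fun t:ℝ => (1 - t/μ')^n) (Ioo 0 μ') volume :=
        (hcont.integrableOn_Icc (a := 0) (b := μ')).mono_set Ioo_subset_Icc_self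
      have hnn : 0 ≤ᵐ[volume.restrict (Ioo (0:ℝ) μ')] fun t => (1 - t/μ')^n := by
        filter_upwards [ae_restrict_mem measurableSet_Ioo] with t ht
        simp only [Pi.zero_apply]
        have h1 : t/μ' < 1 := (div_lt_one hμ'pos).mpr ht.2
        exact pow_nonneg (by linarith) n
      rw [← ofReal_integral_eq_lintegral_ofReal hInt hnn]
      rw [integral_piece1 n hμ'pos, hWr, ← ENNReal.ofReal_mul (by positivity)]
      congr 1
      ring
    -- pointwise form of c2
    have hc2 : ∀ t : ℝ, 0 ≤ t → c2 t = ENNReal.ofReal (Vr - (1+t/μ')^n * Wr) := by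
      intro t ht
      rw [hc2def]
      simp only
      rw [hVr, hWr, ← ENNReal.ofReal_mul (by positivity),
        ENNReal.ofReal_sub _ (by positivity)]
    by_cases hW0 : W = 0
    · -- degenerate case: contradiction with finiteness of the integral
      exfalso
      have hc2' : ∀ t : ℝ, c2 t = volume P := by
        intro t
        rw [hc2def]
        simp [hW0]
      have htot : (⊤:ENNReal) ≤ ∫⁻ s in P, (G s).abs ∂volume := by
        have h1 : ∫⁻ t in Ioi (0:ℝ), c2 t = ⊤ := by
          simp only [hc2']
          rw [setLIntegral_const, Real.volume_Ioi, ENNReal.mul_top hV0]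
        calc (⊤:ENNReal) = ∫⁻ t in Ioi (0:ℝ), c2 t := h1.symm
          _ ≤ ∫⁻ t in Ioi (0:ℝ), (c1 t + c2 t) := lintegral_mono fun t => le_add_self
          _ ≤ ∫⁻ s in P, (G s).abs ∂volume := hIbound
      exact hint (top_le_iff.mp htot)
    · have hWr0 : 0 < Wr := ENNReal.toReal_pos hW0 hWtop
      have hVrW : Wr ≤ Vr := ENNReal.toReal_mono hVtop hWV
      have hVr0 : 0 < Vr := lt_of_lt_of_le hWr0 hVrW
      -- choose the scaling factor R
      obtain ⟨R, hR1, hRW⟩ : ∃ R : ℝ, 1 ≤ R ∧ Wr * R^n = Vr := by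
        by_cases hn : n = 0
        · refine ⟨1, le_rfl, ?_⟩
          subst hn
          have hsub : Subsingleton (EuclideanSpace ℝ (Fin 0)) :=
            inferInstanceAs (Subsingleton (PiLp 2 fun _ : Fin 0 => ℝ))
          have hNP' : N = P := by
            apply Set.Subset.antisymm hNP
            intro x hx
            have : x = x₀ := hsub.elim x x₀
            rw [this]
            exact hx₀N
          rw [hWrdef, hWdef, hNP']
          simp [hVrdef]
        · refine ⟨(Vr / Wr) ^ ((n:ℝ)⁻¹), ?_, ?_⟩
          · apply Real.one_le_rpow _ (by positivity)
            rw [le_div_iff₀ hWr0]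
            simpa using hVrW
          · rw [← Real.rpow_natCast ((Vr / Wr) ^ ((n:ℝ)⁻¹)) n, ← Real.rpow_mul (by positivity),
              inv_mul_cancel₀ (by exact_mod_cast hn), Real.rpow_one]
            field_simp
      set T : ℝ := μ' * (R - 1) with hTdef
      have hT0 : 0 ≤ T := by
        rw [hTdef]
        nlinarith
      have hRT : 1 + T/μ' = R := by
        rw [hTdef]
        field_simp
        ring
      -- lower bound for ∫ c2
      have hI2 : ENNReal.ofReal (Vr * T - Wr * (μ' * ((R^(n+1) - 1)/((n:ℝ)+1)))) ≤
          ∫⁻ t in Ioi (0:ℝ), c2 t := by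
        have hmono : ∫⁻ t in Ioo (0:ℝ) T, c2 t ≤ ∫⁻ t in Ioi (0:ℝ), c2 t :=
          lintegral_mono_set (fun x hx => hx.1)
        refine le_trans (le_of_eq ?_) hmono
        have hcongr : ∫⁻ t in Ioo (0:ℝ) T, c2 t =
            ∫⁻ t in Ioo (0:ℝ) T, ENNReal.ofReal (Vr - (1+t/μ')^n * Wr) :=
          setLIntegral_congr_fun measurableSet_Ioo (fun t ht => hc2 t ht.1.le)
        have hcont2 : Continuous fun t:ℝ => Vr - (1+t/μ')^n * Wr := by fun_prop
        have hInt2 : IntegrableOn (fun t:ℝ => Vr - (1+t/μ')^n * Wr) (Ioo 0 T) volume :=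
          (hcont2.integrableOn_Icc (a := 0) (b := T)).mono_set Ioo_subset_Icc_self
        have hnn2 : 0 ≤ᵐ[volume.restrict (Ioo (0:ℝ) T)] fun t => Vr - (1+t/μ')^n * Wr := by
          filter_upwards [ae_restrict_mem measurableSet_Ioo] with t ht
          simp only [Pi.zero_apply]
          have h1 : (1:ℝ) + t/μ' ≤ R := by
            rw [← hRT]
            gcongr
            exact ht.2.le
          have h2 : ((1:ℝ) + t/μ')^n ≤ R^n :=
            pow_le_pow_left₀ (by have := div_nonneg ht.1.le hμ'pos.le; linarith) h1 n
          have h3 := mul_le_mul_of_nonneg_right h2 hWr0.le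
          have h4 : R^n * Wr = Vr := by rw [mul_comm]; exact hRW
          linarith
        rw [hcongr, ← ofReal_integral_eq_lintegral_ofReal hInt2 hnn2]
        congr 1
        exact (integral_piece2 n hμ'pos hT0 hRT).symm
      -- combine everything
      have hkey := real_key n hμ'pos hWr0 hR1 hRW
      have hsum : ENNReal.ofReal (((2:ℝ) ^ (((n:ℝ)+1))⁻¹ - 1) * μ' * Vr) ≤
          ∫⁻ s in P, (G s).abs ∂volume := by
        calc ENNReal.ofReal (((2:ℝ) ^ (((n:ℝ)+1))⁻¹ - 1) * μ' * Vr)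
            ≤ ENNReal.ofReal (Wr * (μ' / ((n:ℝ)+1)) +
                (Vr * T - Wr * (μ' * ((R^(n+1) - 1)/((n:ℝ)+1))))) := by
              apply ENNReal.ofReal_le_ofReal
              rw [hTdef]
              exact hkey
          _ ≤ ENNReal.ofReal (Wr * (μ' / ((n:ℝ)+1))) +
                ENNReal.ofReal (Vr * T - Wr * (μ' * ((R^(n+1) - 1)/((n:ℝ)+1)))) :=
              ENNReal.ofReal_add_le
          _ ≤ (∫⁻ t in Ioi (0:ℝ), c1 t) + ∫⁻ t in Ioi (0:ℝ), c2 t :=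
              add_le_add (le_of_eq hI1.symm) hI2
          _ = ∫⁻ t in Ioi (0:ℝ), (c1 t + c2 t) := (lintegral_add_left hc1meas _).symm
          _ ≤ ∫⁻ s in P, (G s).abs ∂volume := hIbound
      have habs : (G x₀).abs = ENNReal.ofReal μ' := by
        rw [← hcoe, EReal.abs_def, abs_neg, abs_of_pos hμ'pos]
      rw [habs]
      have hcE0 : ENNReal.ofReal ((2:ℝ) ^ (((n:ℝ)+1))⁻¹ - 1) ≠ 0 := by
        simp only [ne_eq, ENNReal.ofReal_eq_zero, not_le]
        exact hc0
      have hcEtop : ENNReal.ofReal ((2:ℝ) ^ (((n:ℝ)+1))⁻¹ - 1) ≠ ⊤ := ENNReal.ofReal_ne_top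
      have hprod : ENNReal.ofReal ((2:ℝ) ^ (((n:ℝ)+1))⁻¹ - 1) * volume P * ENNReal.ofReal μ' ≤
          ∫⁻ s in P, (G s).abs ∂volume := by
        rw [hVr, ← ENNReal.ofReal_mul hc0.le, ← ENNReal.ofReal_mul (by positivity)]
        refine le_trans (ENNReal.ofReal_le_ofReal (le_of_eq ?_)) hsum
        ring
      calc ENNReal.ofReal μ'
          = (ENNReal.ofReal ((2:ℝ) ^ (((n:ℝ)+1))⁻¹ - 1) * volume P)⁻¹ *
              (ENNReal.ofReal ((2:ℝ) ^ (((n:ℝ)+1))⁻¹ - 1) * volume P *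
                ENNReal.ofReal μ') := by
            rw [← mul_assoc, ENNReal.inv_mul_cancel (mul_ne_zero hcE0 hV0)
              (ENNReal.mul_ne_top hcEtop hVtop), one_mul]
        _ ≤ (ENNReal.ofReal ((2:ℝ) ^ (((n:ℝ)+1))⁻¹ - 1) * volume P)⁻¹ *
              ∫⁻ s in P, (G s).abs ∂volume := mul_le_mul_right hprod _
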